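/- Let n ≥ 1 and let T be a real n×n row-stochastic matrix that factors as T = 𝓛₁ * ⋯ * 𝓛_p * 𝓤_q * ⋯ * 𝓤₁, where each 𝓛ᵢ is a positive lower-bidiagonal matrix and each 𝓤ⱼ is a positive upper-bidiagonal matrix. Then there exist positive lower-bidiagonal matrices L̂₁, …, L̂_p and positive upper-bidiagonal matrices Û₁, …, Û_q, each of which is row-stochastic, such that T = L̂₁ * ⋯ * L̂_p * Û_q * ⋯ * Û₁. -/

import Mathlib

def IsPosLowerBidiagonal {n : ℕ} (L : Matrix (Fin n) (Fin n) ℝ) : Prop :=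
  (∀ i j : Fin n, (i : ℕ) ≠ (j : ℕ) → (i : ℕ) ≠ (j : ℕ) + 1 → L i j = 0) ∧
  (∀ i : Fin n, 0 < L i i) ∧
  (∀ i j : Fin n, (i : ℕ) = (j : ℕ) + 1 → 0 < L i j)

def IsPosUpperBidiagonal {n : ℕ} (U : Matrix (Fin n) (Fin n) ℝ) : Prop :=
  (∀ i j : Fin n, (j : ℕ) ≠ (i : ℕ) → (j : ℕ) ≠ (i : ℕ) + 1 → U i j = 0) ∧
  (∀ i : Fin n, 0 < U i i) ∧
  (∀ i j : Fin n, (j : ℕ) = (i : ℕ) + 1 → 0 < U i j)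

/-- A real `n×n` matrix is row-stochastic if all entries are nonnegative and
each row sums to `1`. -/
def IsRowStochastic {n : ℕ} (A : Matrix (Fin n) (Fin n) ℝ) : Prop :=
  (∀ i j, 0 ≤ A i j) ∧ (∀ i, ∑ j, A i j = 1)


open Matrix

private lemma mulVec_pos {n : ℕ} (M : Matrix (Fin n) (Fin n) ℝ) (hM : ∀ i j, 0 ≤ M i j)
    (hd : ∀ i, 0 < M i i) (v : Fin n → ℝ) (hv : ∀ i, 0 < v i) :
    ∀ i, 0 < (M *ᵥ v) i := by
  intro i
  simp only [Matrix.mulVec, dotProduct]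
  apply Finset.sum_pos' (fun j _ => mul_nonneg (hM i j) (hv j).le)
  exact ⟨i, Finset.mem_univ i, mul_pos (hd i) (hv i)⟩

private lemma listProd_mulVec_pos {n : ℕ} (Ms : List (Matrix (Fin n) (Fin n) ℝ))
    (h : ∀ M ∈ Ms, (∀ i j, 0 ≤ M i j) ∧ (∀ i, 0 < M i i))
    (v : Fin n → ℝ) (hv : ∀ i, 0 < v i) : ∀ i, 0 < (Ms.prod *ᵥ v) i := by
  induction Ms with
  | nil => simpa using hv
  | cons M Ms ih =>
      rw [List.prod_cons, ← Matrix.mulVec_mulVec]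
      exact mulVec_pos M (h M (by simp)).1 (h M (by simp)).2 _
        (ih (fun N hN => h N (by simp [hN])))

/-- Key rescaling lemma. -/
private lemma rescale {n : ℕ} (Ms : List (Matrix (Fin n) (Fin n) ℝ))
    (h : ∀ M ∈ Ms, (∀ i j, 0 ≤ M i j) ∧ (∀ i, 0 < M i i))
    (v : Fin n → ℝ) (hv : ∀ i, 0 < v i) :
    ∃ Ns : List (Matrix (Fin n) (Fin n) ℝ), Ns.length = Ms.length ∧
      (∀ pr ∈ Ns.zip Ms,
        (∀ i j, 0 ≤ pr.1 i j) ∧ (∀ i, ∑ j, pr.1 i j = 1) ∧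
        (∀ i j, pr.1 i j = 0 ↔ pr.2 i j = 0)) ∧
      Matrix.diagonal (Ms.prod *ᵥ v) * Ns.prod = Ms.prod * Matrix.diagonal v := by
  induction Ms with
  | nil =>
      refine ⟨[], rfl, by simp, by simp⟩
  | cons M Ms ih =>
      obtain ⟨Ns, hlen, hmem, hprod⟩ := ih (fun N hN => h N (by simp [hN]))
      set w : Fin n → ℝ := Ms.prod *ᵥ v with hw
      have hwpos : ∀ i, 0 < w i :=
        listProd_mulVec_pos Ms (fun N hN => h N (by simp [hN])) v hv
      have hMnn := (h M (by simp)).1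
      have hMd := (h M (by simp)).2
      set u : Fin n → ℝ := M *ᵥ w with hu
      have hupos : ∀ i, 0 < u i := mulVec_pos M hMnn hMd w hwpos
      set N : Matrix (Fin n) (Fin n) ℝ := Matrix.of (fun i j => M i j * w j / u i) with hN
      have hNapp : ∀ i j, N i j = M i j * w j / u i := fun i j => rfl
      refine ⟨N :: Ns, by simp [hlen], ?_, ?_⟩
      · intro pr hpr
        rw [List.zip_cons_cons, List.mem_cons] at hpr
        rcases hpr with hpr | hpr
        · subst hpr
          refine ⟨fun i j => div_nonneg (mul_nonneg (hMnn i j) (hwpos j).le) (hupos i).le,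
            fun i => ?_, fun i j => ?_⟩
          · simp only [hNapp]
            rw [← Finset.sum_div, div_eq_one_iff_eq (hupos i).ne']
            simp [hu, Matrix.mulVec, dotProduct]
          · show N i j = 0 ↔ M i j = 0
            rw [hNapp, div_eq_zero_iff, mul_eq_zero]
            constructor
            · rintro ((h1 | h1) | h1)
              · exact h1
              · exact absurd h1 (hwpos j).ne'
              · exact absurd h1 (hupos i).ne'
            · intro h1; exact Or.inl (Or.inl h1)
        · exact hmem pr hpr
      · have key : Matrix.diagonal u * N = M * Matrix.diagonal w := by
          ext i j
          rw [Matrix.diagonal_mul, Matrix.mul_diagonal, hNapp, mul_comm,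
            div_mul_cancel₀ _ (hupos i).ne']
        calc Matrix.diagonal ((M :: Ms).prod *ᵥ v) * (N :: Ns).prod
            = (Matrix.diagonal u * N) * Ns.prod := by
              rw [List.prod_cons, List.prod_cons, ← Matrix.mulVec_mulVec, ← hw, ← hu,
                Matrix.mul_assoc]
          _ = M * (Matrix.diagonal w * Ns.prod) := by rw [key, Matrix.mul_assoc]
          _ = M * (Ms.prod * Matrix.diagonal v) := by rw [hprod]
          _ = (M :: Ms).prod * Matrix.diagonal v := by rw [List.prod_cons, Matrix.mul_assoc]

private lemma lower_nonneg_posdiag {n : ℕ} {L : Matrix (Fin n) (Fin n) ℝ}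
    (h : IsPosLowerBidiagonal L) : (∀ i j, 0 ≤ L i j) ∧ (∀ i, 0 < L i i) := by
  refine ⟨fun i j => ?_, h.2.1⟩
  by_cases h1 : (i : ℕ) = (j : ℕ)
  · have : i = j := Fin.ext h1
    subst this; exact (h.2.1 i).le
  by_cases h2 : (i : ℕ) = (j : ℕ) + 1
  · exact (h.2.2 i j h2).le
  · exact (h.1 i j h1 h2).ge

private lemma upper_nonneg_posdiag {n : ℕ} {U : Matrix (Fin n) (Fin n) ℝ}
    (h : IsPosUpperBidiagonal U) : (∀ i j, 0 ≤ U i j) ∧ (∀ i, 0 < U i i) := by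
  refine ⟨fun i j => ?_, h.2.1⟩
  by_cases h1 : (j : ℕ) = (i : ℕ)
  · have : i = j := Fin.ext h1.symm
    subst this; exact (h.2.1 i).le
  by_cases h2 : (j : ℕ) = (i : ℕ) + 1
  · exact (h.2.2 i j h2).le
  · exact (h.1 i j h1 h2).ge


/-- A row-stochastic matrix with a positive bidiagonal factorization admits a
positive *stochastic* bidiagonal factorization. -/
theorem stochastic_bidiagonal_factorization
    {n p q : ℕ} (hn : 1 ≤ n) (T : Matrix (Fin n) (Fin n) ℝ)
    (hTstoch : IsRowStochastic T)
    (cL : Fin p → Matrix (Fin n) (Fin n) ℝ) (cU : Fin q → Matrix (Fin n) (Fin n) ℝ)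
    (hcL : ∀ i, IsPosLowerBidiagonal (cL i)) (hcU : ∀ j, IsPosUpperBidiagonal (cU j))
    (hT : T = (List.ofFn cL).prod * (List.ofFn cU).reverse.prod) :
    ∃ (L : Fin p → Matrix (Fin n) (Fin n) ℝ) (U : Fin q → Matrix (Fin n) (Fin n) ℝ),
      (∀ i, IsPosLowerBidiagonal (L i) ∧ IsRowStochastic (L i)) ∧
      (∀ j, IsPosUpperBidiagonal (U j) ∧ IsRowStochastic (U j)) ∧
      T = (List.ofFn L).prod * (List.ofFn U).reverse.prod := by
  classical
  set Ms : List (Matrix (Fin n) (Fin n) ℝ) := List.ofFn cL ++ (List.ofFn cU).reverse with hMs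
  have hMsprod : Ms.prod = T := by
    rw [hMs, List.prod_append, hT]
  have hMslen : Ms.length = p + q := by simp [hMs]
  have hMsmem : ∀ M ∈ Ms, (∀ i j, 0 ≤ M i j) ∧ (∀ i, 0 < M i i) := by
    intro M hM
    rw [hMs, List.mem_append] at hM
    rcases hM with hM | hM
    · obtain ⟨k, rfl⟩ := List.mem_ofFn.mp hM
      exact lower_nonneg_posdiag (hcL k)
    · rw [List.mem_reverse] at hM
      obtain ⟨k, rfl⟩ := List.mem_ofFn.mp hM
      exact upper_nonneg_posdiag (hcU k)
  obtain ⟨Ns, hlen, hmem, hprod⟩ :=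
    rescale Ms hMsmem (fun _ => 1) (fun _ => one_pos)
  have hones : (Ms.prod *ᵥ fun _ => (1 : ℝ)) = fun _ => 1 := by
    funext i
    simp [hMsprod, Matrix.mulVec, dotProduct, hTstoch.2 i]
  rw [hones] at hprod
  have hdiag1 : (Matrix.diagonal fun _ : Fin n => (1 : ℝ)) = 1 := by
    simp [Matrix.diagonal_one]
  rw [hdiag1, one_mul, mul_one, hMsprod] at hprod
  -- per-index facts
  have hNslen : Ns.length = p + q := hlen.trans hMslen
  have hfact : ∀ (k : ℕ) (hk : k < p + q),
      (∀ i j, 0 ≤ (Ns[k]'(by omega)) i j) ∧ (∀ i, ∑ j, (Ns[k]'(by omega)) i j = 1) ∧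
      (∀ i j, (Ns[k]'(by omega)) i j = 0 ↔ (Ms[k]'(by omega)) i j = 0) := by
    intro k hk
    have hz : k < (Ns.zip Ms).length := by
      rw [List.length_zip]; omega
    have := hmem ((Ns.zip Ms)[k]'hz) (List.getElem_mem hz)
    rwa [List.getElem_zip] at this
  -- the factors
  refine ⟨fun k => Ns[(k : ℕ)]'(by omega), fun j => Ns[p + (q - 1 - (j : ℕ))]'(by omega), ?_, ?_, ?_⟩
  · intro k
    have hMk : Ms[(k : ℕ)]'(by rw [hMslen]; omega) = cL k := by
      simp only [hMs]
      rw [List.getElem_append_left (by simp), List.getElem_ofFn]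
    obtain ⟨hnn, hsum, hzero⟩ := hfact k (by omega)
    rw [hMk] at hzero
    have hpos : ∀ i j : Fin n, cL k i j ≠ 0 → 0 < (Ns[(k : ℕ)]'(by omega)) i j := by
      intro i j hne
      rcases (hnn i j).lt_or_eq with h | h
      · exact h
      · exact absurd ((hzero i j).mp h.symm) hne
    refine ⟨⟨fun i j h1 h2 => (hzero i j).mpr ((hcL k).1 i j h1 h2), ?_, ?_⟩, hnn, hsum⟩
    · exact fun i => hpos i i ((hcL k).2.1 i).ne'
    · exact fun i j hij => hpos i j ((hcL k).2.2 i j hij).ne'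
  · intro j
    have hjq : (j : ℕ) < q := j.isLt
    have hMj : Ms[p + (q - 1 - (j : ℕ))]'(by rw [hMslen]; omega) = cU j := by
      simp only [hMs]
      rw [List.getElem_append_right (by simp only [List.length_ofFn]; omega),
        List.getElem_reverse]
      simp only [List.length_ofFn, List.getElem_ofFn, List.length_reverse]
      exact congrArg cU (Fin.ext (by simp only []; omega))
    obtain ⟨hnn, hsum, hzero⟩ := hfact (p + (q - 1 - (j : ℕ))) (by omega)
    rw [hMj] at hzero
    have hpos : ∀ i i' : Fin n, cU j i i' ≠ 0 →
        0 < (Ns[p + (q - 1 - (j : ℕ))]'(by omega)) i i' := by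
      intro i i' hne
      rcases (hnn i i').lt_or_eq with h | h
      · exact h
      · exact absurd ((hzero i i').mp h.symm) hne
    refine ⟨⟨fun i i' h1 h2 => (hzero i i').mpr ((hcU j).1 i i' h1 h2), ?_, ?_⟩, hnn, hsum⟩
    · exact fun i => hpos i i ((hcU j).2.1 i).ne'
    · exact fun i i' hii => hpos i i' ((hcU j).2.2 i i' hii).ne'
  · -- product identity
    have htake : List.ofFn (fun k : Fin p => Ns[(k : ℕ)]'(by omega)) = Ns.take p := by
      apply List.ext_getElem (by simp [hNslen])
      intro k h1 h2
      rw [List.getElem_ofFn, List.getElem_take]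
    have hdroprev : (List.ofFn (fun j : Fin q =>
        Ns[p + (q - 1 - (j : ℕ))]'(by omega))).reverse = Ns.drop p := by
      apply List.ext_getElem (by simp [hNslen])
      intro k h1 h2
      have hk : k < q := by simp [hNslen] at h2; omega
      rw [List.getElem_reverse, List.getElem_drop]
      simp only [List.length_ofFn, List.getElem_ofFn]
      congr 2
      omega
    rw [htake, hdroprev, ← List.prod_append, List.take_append_drop, hprod]
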